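/- Let d ≥ 1, let f : ℝ^d → ℝ^d be continuous, let p ≥ 1 be an integer, and for each ν ≥ 1 and j ∈ {1,…,p} let A_ν^{(j)} be a non-empty bounded subset of ℝ^d. Write A_ν = A_ν^{(1)} ∪ … ∪ A_ν^{(p)}. Assume: (Ha) inf{|x| : x ∈ A_ν} → ∞ as ν → ∞; (Hb) for each ν ≥ 1 and each j ∈ {1,…,p} there exists i ∈ {1,…,p} with f(A_ν^{(j)}) ⊇ A_{ν+1}^{(i)}; (Hc) there is a strictly increasing sequence of positive integers (ν_k) such that for each k and each j ∈ {1,…,p} there exists i ∈ {1,…,p} with f(A_{ν_k}^{(j)}) ⊇ A_{ν_k}^{(i)}. Then for every sequence (a_n)_{n ≥ 1} of positive reals with a_n → ∞, there exist ζ ∈ ℝ^d and N₁ ∈ ℕ such that |f^n(ζ)| → ∞ as n → ∞ and |f^n(ζ)| ≤ a_{n + N₁} for all n ≥ 0. -/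

import Mathlib

open Filter Topology

theorem holding_up_lemma
    (d : ℕ) (hd : 1 ≤ d)
    (f : EuclideanSpace ℝ (Fin d) → EuclideanSpace ℝ (Fin d)) (hf : Continuous f)
    (p : ℕ) (hp : 1 ≤ p)
    (A : ℕ → Fin p → Set (EuclideanSpace ℝ (Fin d)))
    (hne : ∀ ν ≥ 1, ∀ j, (A ν j).Nonempty)
    (hbdd : ∀ ν ≥ 1, ∀ j, Bornology.IsBounded (A ν j))
    (Ha : Tendsto (fun ν => sInf ((fun x => ‖x‖) '' ⋃ j, A ν j)) atTop atTop)
    (Hb : ∀ ν ≥ 1, ∀ j, ∃ i, A (ν + 1) i ⊆ f '' A ν j)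
    (ν : ℕ → ℕ) (hν₁ : ∀ k, 1 ≤ ν k) (hνmono : StrictMono ν)
    (Hc : ∀ k, ∀ j, ∃ i, A (ν k) i ⊆ f '' A (ν k) j) :
    ∀ a : ℕ → ℝ, (∀ n ≥ 1, 0 < a n) → Tendsto a atTop atTop →
      ∃ (ζ : EuclideanSpace ℝ (Fin d)) (N₁ : ℕ),
        Tendsto (fun n => ‖f^[n] ζ‖) atTop atTop ∧
        ∀ n, ‖f^[n] ζ‖ ≤ a (n + N₁) := by
  intro a hapos ha
  -- uniform norm bounds on the levels
  have hRex : ∀ μ : ℕ, ∃ R : ℝ, 1 ≤ μ → ∀ j, ∀ x ∈ A μ j, ‖x‖ ≤ R := by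
    intro μ
    by_cases h : 1 ≤ μ
    · obtain ⟨R, hR⟩ :=
        (Bornology.isBounded_iUnion.2 fun j => hbdd μ h j).exists_norm_le
      exact ⟨R, fun _ j x hx => hR x (Set.mem_iUnion.2 ⟨j, hx⟩)⟩
    · exact ⟨0, fun h' => absurd h' h⟩
  choose R hR using hRex
  -- maxima over blocks
  have hIccne : ∀ k, (Finset.Icc (ν k) (ν (k + 1))).Nonempty := fun k =>
    Finset.nonempty_Icc.2 (hνmono.monotone (Nat.le_succ k))
  set M : ℕ → ℝ := fun k => (Finset.Icc (ν k) (ν (k + 1))).sup' (hIccne k) R with hM_def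
  have hM : ∀ k μ, ν k ≤ μ → μ ≤ ν (k + 1) → R μ ≤ M k := fun k μ h1 h2 =>
    Finset.le_sup' R (Finset.mem_Icc.2 ⟨h1, h2⟩)
  -- waiting times
  have hTex : ∀ k, ∃ N : ℕ, 1 ≤ N ∧ ∀ n ≥ N, M k ≤ a n := by
    intro k
    obtain ⟨N, hN⟩ := (ha.eventually_ge_atTop (M k)).exists_forall_of_atTop
    exact ⟨max N 1, le_max_right _ _, fun n hn => hN n (le_trans (le_max_left N 1) hn)⟩
  choose T hT1 hT using hTex
  -- the schedule of arrival times
  obtain ⟨t, ht0, htsucc⟩ : ∃ t : ℕ → ℕ, t 0 = 0 ∧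
      ∀ k, t (k + 1) = max (t k + (ν (k + 1) - ν k)) (T (k + 1)) :=
    ⟨fun k => Nat.rec 0 (fun k tk => max (tk + (ν (k + 1) - ν k)) (T (k + 1))) k,
      rfl, fun k => rfl⟩
  have hνd : ∀ k, 1 ≤ ν (k + 1) - ν k := fun k => by
    have := hνmono (show k < k + 1 by omega); omega
  have htΔ : ∀ k, t k + (ν (k + 1) - ν k) ≤ t (k + 1) := fun k =>
    (htsucc k).symm ▸ le_max_left _ _
  have htT : ∀ k, T (k + 1) ≤ t (k + 1) := fun k => (htsucc k).symm ▸ le_max_right _ _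
  have htlt : ∀ k, t k < t (k + 1) := fun k => by
    have := htΔ k; have := hνd k; omega
  have htmono : StrictMono t := strictMono_nat_of_lt_succ htlt
  have htk : ∀ k, k ≤ t k := by
    intro k
    induction k with
    | zero => omega
    | succ k ih => have := htlt k; omega
  -- segment index
  obtain ⟨K, hK_def⟩ : ∃ K : ℕ → ℕ, ∀ n, K n = Nat.findGreatest (fun k => t k ≤ n) n :=
    ⟨_, fun n => rfl⟩
  have htK : ∀ n, t (K n) ≤ n := by
    intro n
    rw [hK_def]
    exact Nat.findGreatest_spec (P := fun k => t k ≤ n) (Nat.zero_le n) (by omega)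
  have hKn : ∀ n, n < t (K n + 1) := by
    intro n
    by_contra h
    push_neg at h
    have h1 : K n + 1 ≤ n := le_trans (htk _) h
    have h2 : K n + 1 ≤ K n := by
      have h3 := Nat.le_findGreatest (P := fun k => t k ≤ n) h1 h
      rw [← hK_def] at h3; exact h3
    omega
  have hKt : ∀ k, K (t k) = k := by
    intro k
    have h1 : k ≤ K (t k) := by
      rw [hK_def]; exact Nat.le_findGreatest (htk k) le_rfl
    have h2 : ¬ k < K (t k) := by
      intro h
      exact absurd (htK (t k)) (not_le.2 (htmono h))
    omega
  -- the level function
  obtain ⟨m, hm_def⟩ : ∃ m : ℕ → ℕ,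
      ∀ n, m n = min (ν (K n + 1)) (ν (K n) + (n - t (K n))) := ⟨_, fun n => rfl⟩
  have hmlb : ∀ n, ν (K n) ≤ m n := by
    intro n
    have h3 : ν (K n) ≤ ν (K n + 1) := hνmono.monotone (Nat.le_succ _)
    rw [hm_def]; omega
  have hmub : ∀ n, m n ≤ ν (K n + 1) := fun n => (hm_def n).symm ▸ min_le_left _ _
  have hm1 : ∀ n, 1 ≤ m n := fun n => le_trans (hν₁ _) (hmlb n)
  have hmt : ∀ k, m (t k) = ν k := by
    intro k
    rw [hm_def, hKt, Nat.sub_self]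
    have h3 : ν k ≤ ν (k + 1) := hνmono.monotone (Nat.le_succ _)
    omega
  -- the basic step property: climb by one or hold at a ν-level
  have hstep : ∀ n, (m (n + 1) = m n + 1) ∨ (m (n + 1) = m n ∧ ∃ k, m n = ν k) := by
    intro n
    have h3 : ν (K n) ≤ ν (K n + 1) := hνmono.monotone (Nat.le_succ _)
    have h1 : t (K n) ≤ n := htK n
    rcases le_or_gt (t (K n + 1)) (n + 1) with h | h
    · -- we arrive at segment K n + 1 at time n + 1
      have he : t (K n + 1) = n + 1 := le_antisymm h (hKn n)
      have hK1 : K (n + 1) = K n + 1 := by rw [← he, hKt]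
      have hm1' : m (n + 1) = ν (K n + 1) := by
        rw [hm_def, hK1, he, Nat.sub_self]
        have : ν (K n + 1) ≤ ν (K n + 1 + 1) := hνmono.monotone (Nat.le_succ _)
        omega
      have h2 : t (K n) + (ν (K n + 1) - ν (K n)) ≤ n + 1 := he ▸ htΔ (K n)
      rcases le_or_gt (ν (K n + 1)) (ν (K n) + (n - t (K n))) with hc | hc
      · refine Or.inr ⟨?_, ⟨K n + 1, ?_⟩⟩
        · rw [hm1', hm_def n]; omega
        · rw [hm_def n]; omega
      · refine Or.inl ?_
        rw [hm1', hm_def n]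
        omega
    · -- we stay in segment K n
      have hK1 : K (n + 1) = K n := by
        have hge : K n ≤ K (n + 1) := by
          have h5 := htk (K n)
          have h6 : K n ≤ n + 1 := by omega
          have h4 := Nat.le_findGreatest (P := fun k => t k ≤ n + 1) h6 (by omega)
          rw [← hK_def] at h4; exact h4
        have hle : ¬ K n < K (n + 1) := by
          intro hlt
          have : t (K n + 1) ≤ t (K (n + 1)) := htmono.monotone hlt
          have := htK (n + 1)
          omega
        omega
      rcases le_or_gt (ν (K n + 1)) (ν (K n) + (n - t (K n))) with hc | hc
      · refine Or.inr ⟨?_, ⟨K n + 1, ?_⟩⟩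
        · rw [hm_def (n + 1), hm_def n, hK1]; omega
        · rw [hm_def n]; omega
      · refine Or.inl ?_
        rw [hm_def (n + 1), hm_def n, hK1]
        omega
  have hmmono : Monotone m := monotone_nat_of_le_succ (by
    intro n; rcases hstep n with h | ⟨h, _⟩ <;> omega)
  have hmtop : Tendsto m atTop atTop := by
    refine tendsto_atTop_atTop.2 fun b => ⟨t b, fun n hn => ?_⟩
    calc b ≤ ν b := hνmono.le_apply
      _ = m (t b) := (hmt b).symm
      _ ≤ m n := hmmono hn
  -- the itinerary of indices
  have hchain : ∀ n (jj : Fin p), ∃ ii, A (m (n + 1)) ii ⊆ f '' A (m n) jj := by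
    intro n jj
    rcases hstep n with h | ⟨h, k, hk⟩
    · rw [h]; exact Hb (m n) (hm1 n) jj
    · rw [h, hk]; exact Hc k jj
  choose g hg using hchain
  obtain ⟨j, hj0, hjsucc⟩ : ∃ j : ℕ → Fin p, j 0 = ⟨0, hp⟩ ∧ ∀ n, j (n + 1) = g n (j n) :=
    ⟨fun n => Nat.rec ⟨0, hp⟩ (fun n jn => g n jn) n, rfl, fun n => rfl⟩
  have hA : ∀ n, A (m (n + 1)) (j (n + 1)) ⊆ f '' A (m n) (j n) := fun n =>
    (hjsucc n) ▸ hg n (j n)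
  -- compact sets
  set C : ℕ → Set (EuclideanSpace ℝ (Fin d)) := fun n => closure (A (m n) (j n)) with hC_def
  have hCc : ∀ n, IsCompact (C n) := fun n => (hbdd _ (hm1 n) _).isCompact_closure
  have hCne : ∀ n, (C n).Nonempty := fun n => (hne _ (hm1 n) _).closure
  have hCsub : ∀ n, C (n + 1) ⊆ f '' C n := by
    intro n
    have h1 : IsClosed (f '' C n) := ((hCc n).image hf).isClosed
    exact closure_minimal ((hA n).trans (Set.image_mono (f := f) subset_closure)) h1
  -- existence of finite orbits
  have horb : ∀ n, ∀ y ∈ C n, ∃ x, f^[n] x = y ∧ ∀ i ≤ n, f^[i] x ∈ C i := by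
    intro n
    induction n with
    | zero =>
      intro y hy
      exact ⟨y, rfl, fun i hi => by simpa [Nat.le_zero.1 hi] using hy⟩
    | succ n ih =>
      intro y hy
      obtain ⟨z, hz, hfz⟩ := hCsub n hy
      obtain ⟨x, hx1, hx2⟩ := ih z hz
      refine ⟨x, ?_, fun i hi => ?_⟩
      · rw [Function.iterate_succ_apply', hx1, hfz]
      · rcases Nat.lt_succ_iff_lt_or_eq.1 (Nat.lt_succ_of_le hi) with h | h
        · exact hx2 i (Nat.lt_succ_iff.1 h)
        · subst h
          rw [Function.iterate_succ_apply', hx1, hfz]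
          exact hy
  -- the nested intersection
  set D : ℕ → Set (EuclideanSpace ℝ (Fin d)) :=
    fun n => ⋂ i ∈ Set.Iic n, f^[i] ⁻¹' C i with hD_def
  have hDne : ∀ n, (D n).Nonempty := by
    intro n
    obtain ⟨x, _, hx⟩ := horb n (hCne n).some (hCne n).some_mem
    exact ⟨x, Set.mem_iInter₂.2 fun i hi => hx i hi⟩
  have hDclosed : ∀ n, IsClosed (D n) := fun n =>
    isClosed_biInter fun i _ => (isClosed_closure).preimage (hf.iterate i)
  have hDsub0 : ∀ n, D n ⊆ C 0 := by
    intro n x hx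
    have := Set.mem_iInter₂.1 hx 0 (Set.mem_Iic.2 (Nat.zero_le n))
    simpa using this
  have hDc : ∀ n, IsCompact (D n) := fun n =>
    (hCc 0).of_isClosed_subset (hDclosed n) (hDsub0 n)
  have hDmono : ∀ n, D (n + 1) ⊆ D n := by
    intro n x hx
    exact Set.mem_iInter₂.2 fun i hi =>
      Set.mem_iInter₂.1 hx i (Set.mem_Iic.2 (le_trans hi (Nat.le_succ n)))
  obtain ⟨ζ, hζ⟩ :=
    IsCompact.nonempty_iInter_of_sequence_nonempty_isCompact_isClosed D hDmono hDne
      (hDc 0) hDclosed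
  have hζn : ∀ n, f^[n] ζ ∈ C n := by
    intro n
    have := Set.mem_iInter.1 hζ n
    exact Set.mem_iInter₂.1 this n (Set.mem_Iic.2 le_rfl)
  -- upper bound
  have hub : ∀ n, ‖f^[n] ζ‖ ≤ R (m n) := by
    intro n
    have h1 : A (m n) (j n) ⊆ {x | ‖x‖ ≤ R (m n)} := fun x hx =>
      hR (m n) (hm1 n) (j n) x hx
    have h2 : IsClosed {x : EuclideanSpace ℝ (Fin d) | ‖x‖ ≤ R (m n)} :=
      isClosed_le continuous_norm continuous_const
    exact closure_minimal h1 h2 (hζn n)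
  have hbound : ∀ n, R (m n) ≤ a (n + T 0) := by
    intro n
    have h1 : R (m n) ≤ M (K n) := hM _ _ (hmlb n) (hmub n)
    have h2 : T (K n) ≤ n + T 0 := by
      rcases Nat.eq_zero_or_pos (K n) with h | h
      · rw [h]; omega
      · have h3 : T (K n) ≤ t (K n) := by
          obtain ⟨k, hk⟩ := Nat.exists_eq_succ_of_ne_zero (Nat.pos_iff_ne_zero.1 h)
          rw [hk]; exact htT k
        have h4 := htK n
        omega
    exact h1.trans (hT _ _ h2)
  -- lower bound and tendsto
  have hlb : ∀ n, sInf ((fun x => ‖x‖) '' ⋃ i, A (m n) i) ≤ ‖f^[n] ζ‖ := by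
    intro n
    have hbb : BddBelow ((fun x : EuclideanSpace ℝ (Fin d) => ‖x‖) '' ⋃ i, A (m n) i) :=
      ⟨0, fun r hr => by
        obtain ⟨x, _, rfl⟩ := hr
        exact norm_nonneg x⟩
    have h1 : A (m n) (j n) ⊆
        {x | sInf ((fun x : EuclideanSpace ℝ (Fin d) => ‖x‖) '' ⋃ i, A (m n) i) ≤ ‖x‖} := by
      intro x hx
      exact csInf_le hbb ⟨x, Set.mem_iUnion.2 ⟨j n, hx⟩, rfl⟩
    have h2 : IsClosed {x : EuclideanSpace ℝ (Fin d) |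
        sInf ((fun x : EuclideanSpace ℝ (Fin d) => ‖x‖) '' ⋃ i, A (m n) i) ≤ ‖x‖} :=
      isClosed_le continuous_const continuous_norm
    exact closure_minimal h1 h2 (hζn n)
  refine ⟨ζ, T 0, ?_, fun n => (hub n).trans (hbound n)⟩
  exact tendsto_atTop_mono hlb (Ha.comp hmtop)
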